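/- Fix natural numbers n, m, l and polynomials F, G₁, …, G_m, H₁, …, H_l in the polynomial ring ℂ[x₁, …, x_n]. Let R = ℂ[μ₁, …, μ_m, λ₁, …, λ_l, x₁, …, x_n] and let ι : ℂ[x₁, …, x_n] → R be the inclusion. Let L ⊆ R be the ideal generated by the polynomials ∂F/∂x_k − ∑_{i=1}^m μ_i·∂G_i/∂x_k − ∑_{j=1}^l λ_j·∂H_j/∂x_k for k = 1, …, n, together with H_j for j = 1, …, l and μ_i·G_i for i = 1, …, m. For each subset S ⊆ {1, …, m}, let L_S ⊆ R be the ideal generated by ∂F/∂x_k − ∑_{i∈S} μ_i·∂G_i/∂x_k − ∑_{j=1}^l λ_j·∂H_j/∂x_k for k = 1, …, n, together with G_i for i ∈ S and H_j for j = 1, …, l. Then the radical of the ideal ⋂_{S ⊆ {1,…,m}} ι⁻¹(L_S) equals the radical of ι⁻¹(L), where ι⁻¹(·) denotes the contraction (preimage) of an ideal of R to ℂ[x₁, …, x_n]. -/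

import Mathlib

open MvPolynomial

/-- Theorem 5.1 of the paper: the radical of the intersection of the contracted Lagrange
ideals `L_S` over all subsets `S` of the inequality constraints equals the radical of the
contracted KKT ideal `L`. -/
theorem kkt_radical_decomposition (n m l : ℕ)
    (F : MvPolynomial (Fin n) ℂ) (Gs : Fin m → MvPolynomial (Fin n) ℂ)
    (Hs : Fin l → MvPolynomial (Fin n) ℂ)
    (ι : MvPolynomial (Fin n) ℂ →ₐ[ℂ] MvPolynomial (Fin m ⊕ Fin l ⊕ Fin n) ℂ)
    (hι : ι = rename (Sum.inr ∘ Sum.inr))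
    (L : Ideal (MvPolynomial (Fin m ⊕ Fin l ⊕ Fin n) ℂ))
    (hL : L = Ideal.span (
      (Set.range fun k : Fin n =>
        ι (pderiv k F)
          - ∑ i : Fin m, X (Sum.inl i) * ι (pderiv k (Gs i))
          - ∑ j : Fin l, X (Sum.inr (Sum.inl j)) * ι (pderiv k (Hs j)))
      ∪ (Set.range fun j : Fin l => ι (Hs j))
      ∪ (Set.range fun i : Fin m => X (Sum.inl i) * ι (Gs i))))
    (LS : Finset (Fin m) → Ideal (MvPolynomial (Fin m ⊕ Fin l ⊕ Fin n) ℂ))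
    (hLS : ∀ S : Finset (Fin m), LS S = Ideal.span (
      (Set.range fun k : Fin n =>
        ι (pderiv k F)
          - ∑ i ∈ S, X (Sum.inl i) * ι (pderiv k (Gs i))
          - ∑ j : Fin l, X (Sum.inr (Sum.inl j)) * ι (pderiv k (Hs j)))
      ∪ ((fun i : Fin m => ι (Gs i)) '' (S : Set (Fin m)))
      ∪ (Set.range fun j : Fin l => ι (Hs j)))) :
    (⨅ S : Finset (Fin m), Ideal.comap ι (LS S)).radical =
      (Ideal.comap ι L).radical := by
  classical
  apply le_antisymm
  · -- hard direction: uses the Nullstellensatz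
    have key : (⨅ S : Finset (Fin m), Ideal.comap ι (LS S)) ≤ (Ideal.comap ι L).radical := by
      intro f hf
      simp only [Ideal.mem_iInf, Ideal.mem_comap] at hf
      have hrad : ι f ∈ L.radical := by
        rw [← vanishingIdeal_zeroLocus_eq_radical (K := ℂ)]
        intro p hp
        simp only [mem_zeroLocus_iff, coe_aeval_eq_eval] at hp ⊢
        set S : Finset (Fin m) := Finset.univ.filter (fun i => eval p (ι (Gs i)) = 0) with hS
        have hμ : ∀ i : Fin m, i ∉ S → p (Sum.inl i) = 0 := by
          intro i hi
          have h1 : eval p (X (Sum.inl i) * ι (Gs i)) = 0 :=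
            hp _ (hL ▸ Ideal.subset_span (Or.inr ⟨i, rfl⟩))
          rw [map_mul, eval_X] at h1
          rcases mul_eq_zero.mp h1 with h | h
          · exact h
          · exact absurd (Finset.mem_filter.mpr ⟨Finset.mem_univ i, h⟩) hi
        have hLSle : LS S ≤ vanishingIdeal ℂ {p} := by
          rw [hLS, Ideal.span_le]
          rintro g hg
          rw [SetLike.mem_coe, mem_vanishingIdeal_singleton_iff]
          change eval p g = 0
          rcases hg with (⟨k, rfl⟩ | ⟨i, hi, rfl⟩) | ⟨j, rfl⟩
          · have h0 : eval p (ι (pderiv k F)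
                - ∑ i : Fin m, X (Sum.inl i) * ι (pderiv k (Gs i))
                - ∑ j : Fin l, X (Sum.inr (Sum.inl j)) * ι (pderiv k (Hs j))) = 0 :=
              hp _ (hL ▸ Ideal.subset_span (Or.inl (Or.inl ⟨k, rfl⟩)))
            simp only [map_sub, map_sum, map_mul, eval_X] at h0 ⊢
            rw [Finset.sum_subset (Finset.subset_univ S)
              (fun i _ hiS => by rw [hμ i hiS, zero_mul])]
            exact h0
          · have hi' : eval p (ι (Gs i)) = 0 :=
              (Finset.mem_filter.mp hi).2
            exact hi'
          · exact hp _ (hL ▸ Ideal.subset_span (Or.inl (Or.inr ⟨j, rfl⟩)))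
        exact (mem_vanishingIdeal_singleton_iff p _).mp (hLSle (hf S))
      obtain ⟨N, hN⟩ := hrad
      exact ⟨N, show f ^ N ∈ Ideal.comap ι L by rw [Ideal.mem_comap, map_pow]; exact hN⟩
    calc (⨅ S : Finset (Fin m), Ideal.comap ι (LS S)).radical
        ≤ (Ideal.comap ι L).radical.radical := Ideal.radical_mono key
      _ = (Ideal.comap ι L).radical := Ideal.radical_idem _
  · apply Ideal.radical_mono
    rw [le_iInf_iff]
    intro S
    -- substitution hom killing μ_i for i ∉ S
    set φ : MvPolynomial (Fin m ⊕ Fin l ⊕ Fin n) ℂ →ₐ[ℂ] MvPolynomial (Fin m ⊕ Fin l ⊕ Fin n) ℂ :=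
      aeval (fun v => match v with
        | Sum.inl i => if i ∈ S then X (Sum.inl i) else 0
        | Sum.inr w => X (Sum.inr w)) with hφ
    have hφι : ∀ g : MvPolynomial (Fin n) ℂ, φ (ι g) = ι g := by
      intro g
      have : φ.comp ι = ι := by
        apply MvPolynomial.algHom_ext
        intro k
        simp [hφ, hι]
      exact DFunLike.congr_fun this g
    have hmap : Ideal.map φ L ≤ LS S := by
      rw [hL, Ideal.map_span, Ideal.span_le]
      rintro _ ⟨g, hg, rfl⟩
      rcases hg with (⟨k, rfl⟩ | ⟨j, rfl⟩) | ⟨i, rfl⟩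
      · -- gradient generator
        have : φ ((fun k : Fin n =>
            ι (pderiv k F)
              - ∑ i : Fin m, X (Sum.inl i) * ι (pderiv k (Gs i))
              - ∑ j : Fin l, X (Sum.inr (Sum.inl j)) * ι (pderiv k (Hs j))) k)
            = ι (pderiv k F)
              - ∑ i ∈ S, X (Sum.inl i) * ι (pderiv k (Gs i))
              - ∑ j : Fin l, X (Sum.inr (Sum.inl j)) * ι (pderiv k (Hs j)) := by
          simp only [map_sub, map_sum, map_mul, hφι]
          simp only [hφ, aeval_X]
          congr 1
          congr 1
          simp only [ite_mul, zero_mul]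
          rw [Finset.sum_ite_mem, Finset.univ_inter]
        rw [this, hLS]
        exact Ideal.subset_span (Or.inl (Or.inl ⟨k, rfl⟩))
      · rw [hφι, hLS]
        exact Ideal.subset_span (Or.inr ⟨j, rfl⟩)
      · rw [map_mul, hφι, hφ]
        simp only [aeval_X]
        by_cases hi : i ∈ S
        · simp only [if_pos hi]
          exact Ideal.mul_mem_left _ _ ((hLS S) ▸ Ideal.subset_span (Or.inl (Or.inr ⟨i, hi, rfl⟩)))
        · simp [if_neg hi]
    intro f hf
    have : φ (ι f) ∈ Ideal.map φ L := Ideal.mem_map_of_mem φ hf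
    rw [hφι] at this
    exact hmap this
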